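/- Let X be a compact Hausdorff space, A a commutative Banach algebra with a bounded net (e_v) such that (σ(e_v)) is a bounded approximate identity for A, where σ ∈ Hom(A) has dense range. If A is σ-weakly amenable, then C(X,A) is σ̃-weakly amenable, where σ̃(f) = σ ∘ f. -/

import Mathlib

set_option linter.unusedSectionVars false

/-- `σ`-weak amenability of a Banach algebra `B`: every bounded `σ`-derivation
`D : B → B*` into the dual bimodule `B*` (with actions `(b·Λ)(x) = Λ(x b)`,
`(Λ·b)(x) = Λ(b x)`) is `σ`-inner. -/
def SigmaWeaklyAmenable (B : Type u) [NonUnitalNormedRing B] [NormedSpace ℂ B]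
    (s : B → B) : Prop :=
  ∀ D : B →L[ℂ] (B →L[ℂ] ℂ),
    (∀ a b x, D (a * b) x = D a (s b * x) + D b (x * s a)) →
    ∃ Λ : B →L[ℂ] ℂ, ∀ a x, D a x = Λ (x * s a) - Λ (s a * x)

open Filter NormedSpace

noncomputable section StmtAux

universe u

variable {X : Type u} [TopologicalSpace X] {A : Type u} [NonUnitalNormedRing A]
  [NormedSpace ℂ A] [IsScalarTower ℂ A A] [SMulCommClass ℂ A A]

/-- The elementary tensor `φ ⊗ a` as an element of `C(X, A)`. -/
def elm (φ : C(X, ℂ)) (a : A) : C(X, A) :=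
  ⟨fun x => φ x • a, (map_continuous φ).smul continuous_const⟩

@[simp] lemma elm_apply (φ : C(X, ℂ)) (a : A) (x : X) : elm φ a x = φ x • a := rfl

lemma elm_mul_elm (φ ψ : C(X, ℂ)) (a b : A) : elm φ a * elm ψ b = elm (φ * ψ) (a * b) := by
  ext x; simp [smul_mul_assoc, mul_smul_comm, smul_smul, mul_comm]

lemma const_mul_elm (a : A) (ψ : C(X, ℂ)) (b : A) :
    ContinuousMap.const X a * elm ψ b = elm ψ (a * b) := by
  ext x; simp [mul_smul_comm]

lemma elm_mul_const (φ : C(X, ℂ)) (a b : A) :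
    elm φ a * ContinuousMap.const X b = elm φ (a * b) := by
  ext x; simp [smul_mul_assoc]

lemma norm_elm_le [CompactSpace X] (φ : C(X, ℂ)) (a : A) : ‖elm φ a‖ ≤ ‖φ‖ * ‖a‖ := by
  refine (ContinuousMap.norm_le _ (by positivity)).mpr fun x => ?_
  calc ‖φ x • a‖ = ‖φ x‖ * ‖a‖ := norm_smul _ _
  _ ≤ ‖φ‖ * ‖a‖ := by
      gcongr
      exact φ.norm_coe_le_norm x

variable (X A) in
/-- `elm` as a continuous bilinear map. -/
def elmL [CompactSpace X] : C(X, ℂ) →L[ℂ] A →L[ℂ] C(X, A) :=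
  LinearMap.mkContinuous₂
    (LinearMap.mk₂ ℂ elm
      (fun φ ψ a => by ext x; simp [add_smul])
      (fun c φ a => by ext x; simp [smul_smul])
      (fun φ a b => by ext x; simp [smul_add])
      (fun c φ a => by ext x; exact smul_comm _ _ _))
    1 (fun φ a => by simpa using norm_elm_le φ a)

@[simp] lemma elmL_apply [CompactSpace X] (φ : C(X, ℂ)) (a : A) : elmL X A φ a = elm φ a := rfl

variable (X A) in
/-- The constant-function embedding as a continuous linear map. -/
def constL [CompactSpace X] : A →L[ℂ] C(X, A) :=
  LinearMap.mkContinuous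
    { toFun := fun a => ContinuousMap.const X a
      map_add' := fun a b => by ext x; simp
      map_smul' := fun c a => by ext x; simp }
    1 (fun a => by
      show ‖ContinuousMap.const X a‖ ≤ 1 * ‖a‖
      rw [one_mul]
      refine (ContinuousMap.norm_le _ (norm_nonneg a)).mpr fun x => ?_
      simp)

@[simp] lemma constL_apply [CompactSpace X] (a : A) : constL X A a = ContinuousMap.const X a := rfl

/-- Conjugating a continuous bilinear functional by continuous linear maps. -/
def conj2 {E F G H : Type*} [NormedAddCommGroup E] [NormedSpace ℂ E]
    [NormedAddCommGroup F] [NormedSpace ℂ F] [NormedAddCommGroup G] [NormedSpace ℂ G]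
    [NormedAddCommGroup H] [NormedSpace ℂ H]
    (T : G →L[ℂ] H →L[ℂ] ℂ) (L : E →L[ℂ] G) (R : F →L[ℂ] H) : E →L[ℂ] F →L[ℂ] ℂ :=
  LinearMap.mkContinuous₂
    (LinearMap.mk₂ ℂ (fun a b => T (L a) (R b)) (by intros; simp) (by intros; simp)
      (by intros; simp) (by intros; simp))
    (‖T‖ * ‖L‖ * ‖R‖)
    (fun a b => by
      calc ‖T (L a) (R b)‖ ≤ ‖T (L a)‖ * ‖R b‖ := (T (L a)).le_opNorm _
      _ ≤ (‖T‖ * ‖L a‖) * (‖R‖ * ‖b‖) := by gcongr <;> [exact T.le_opNorm _; exact R.le_opNorm _]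
      _ ≤ (‖T‖ * (‖L‖ * ‖a‖)) * (‖R‖ * ‖b‖) := by gcongr; exact L.le_opNorm _
      _ = ‖T‖ * ‖L‖ * ‖R‖ * ‖a‖ * ‖b‖ := by ring)

@[simp] lemma conj2_apply {E F G H : Type*} [NormedAddCommGroup E] [NormedSpace ℂ E]
    [NormedAddCommGroup F] [NormedSpace ℂ F] [NormedAddCommGroup G] [NormedSpace ℂ G]
    [NormedAddCommGroup H] [NormedSpace ℂ H]
    (T : G →L[ℂ] H →L[ℂ] ℂ) (L : E →L[ℂ] G) (R : F →L[ℂ] H) (a : E) (b : F) :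
    conj2 T L R a b = T (L a) (R b) := rfl

end StmtAux
section L5

variable {X : Type u} [TopologicalSpace X] [CompactSpace X]

open scoped Nat

lemma CX_pow_rule (B : C(X, ℂ) →L[ℂ] C(X, ℂ) →L[ℂ] ℂ)
    (hB : ∀ p q r, B (p * q) r = B p (q * r) + B q (p * r)) (g r : C(X, ℂ)) :
    ∀ n : ℕ, B (g ^ (n + 1)) r = ((n : ℂ) + 1) • B g (g ^ n * r) := by
  intro n
  induction n generalizing r with
  | zero => simp
  | succ n ih =>
    have h1 : g ^ (n + 2) = g * g ^ (n + 1) := by ring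
    rw [h1, hB, ih]
    have h2 : g ^ n * (g * r) = g ^ (n + 1) * r := by ring
    rw [h2]
    push_cast
    module

lemma CX_one_rule (B : C(X, ℂ) →L[ℂ] C(X, ℂ) →L[ℂ] ℂ)
    (hB : ∀ p q r, B (p * q) r = B p (q * r) + B q (p * r)) (r : C(X, ℂ)) :
    B 1 r = 0 := by
  have := hB 1 1 r
  simp at this
  linear_combination this

lemma CX_exp_rule (B : C(X, ℂ) →L[ℂ] C(X, ℂ) →L[ℂ] ℂ)
    (hB : ∀ p q r, B (p * q) r = B p (q * r) + B q (p * r)) (g r : C(X, ℂ)) :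
    B (exp g) r = B g (exp g * r) := by
  have hexpg : exp g = ∑' n : ℕ, (n !⁻¹ : ℂ) • g ^ n := by rw [exp_eq_tsum ℂ]
  have hsum : Summable fun n : ℕ => (n !⁻¹ : ℂ) • g ^ n := expSeries_summable' g
  have hmul := ContinuousLinearMap.map_tsum ((ContinuousLinearMap.mul ℂ C(X, ℂ)).flip r) hsum
  have hR : Summable fun n : ℕ => (n !⁻¹ : ℂ) • (g ^ n * r) := by
    have := hsum.map (((ContinuousLinearMap.mul ℂ C(X, ℂ)).flip r).toLinearMap.toAddMonoidHom)
      ((ContinuousLinearMap.mul ℂ C(X, ℂ)).flip r).continuous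
    simpa [Function.comp_def, smul_mul_assoc, mul_comm] using this
  have hL : Summable fun n : ℕ => B ((n !⁻¹ : ℂ) • g ^ n) r := by
    have := hsum.map (B.flip r).toLinearMap.toAddMonoidHom (B.flip r).continuous
    simpa [Function.comp_def] using this
  calc B (exp g) r = B (∑' n : ℕ, (n !⁻¹ : ℂ) • g ^ n) r := by rw [hexpg]
  _ = ∑' n : ℕ, B ((n !⁻¹ : ℂ) • g ^ n) r := by
      have := ContinuousLinearMap.map_tsum (B.flip r) hsum
      simpa using this
  _ = ∑' n : ℕ, (n !⁻¹ : ℂ) • B (g ^ n) r := by simp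
  _ = (0 !⁻¹ : ℂ) • B (g ^ 0) r + ∑' n : ℕ, ((n + 1)!⁻¹ : ℂ) • B (g ^ (n + 1)) r := by
      refine Summable.tsum_eq_zero_add ?_
      simpa using hL
  _ = ∑' n : ℕ, (n !⁻¹ : ℂ) • B g (g ^ n * r) := by
      rw [pow_zero, CX_one_rule B hB, smul_zero, zero_add]
      congr 1
      funext n
      rw [CX_pow_rule B hB, smul_smul]
      congr 1
      have hn : ((n : ℂ) + 1) ≠ 0 := Nat.cast_add_one_ne_zero n
      rw [Nat.factorial_succ]
      push_cast
      rw [mul_inv, mul_comm (((n : ℂ) + 1))⁻¹, mul_assoc, inv_mul_cancel₀ hn, mul_one]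
  _ = ∑' n : ℕ, B g ((n !⁻¹ : ℂ) • (g ^ n * r)) := by simp
  _ = B g (∑' n : ℕ, (n !⁻¹ : ℂ) • (g ^ n * r)) := (ContinuousLinearMap.map_tsum (B g) hR).symm
  _ = B g (exp g * r) := by
      congr 1
      rw [hexpg]
      simpa [ContinuousLinearMap.flip_apply, smul_mul_assoc, mul_comm] using hmul.symm

end L5
section L5b

variable {X : Type u} [TopologicalSpace X] [CompactSpace X]

/-- Real-valued continuous map viewed inside `C(X, ℂ)`. -/
def ofRealCM (f : C(X, ℝ)) : C(X, ℂ) :=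
  ⟨fun x => (f x : ℂ), Complex.continuous_ofReal.comp (map_continuous f)⟩

@[simp] lemma ofRealCM_apply (f : C(X, ℝ)) (x : X) : ofRealCM f x = (f x : ℂ) := rfl

lemma norm_exp_smul_le (f : C(X, ℝ)) (c : ℂ) (hc : c.re = 0) :
    ‖NormedSpace.exp (c • ofRealCM f)‖ ≤ 1 := by
  refine (ContinuousMap.norm_le _ zero_le_one).mpr fun x => ?_
  have h1 : (NormedSpace.exp (c • ofRealCM f)) x
      = NormedSpace.exp ((c • ofRealCM f) x) := by
    exact map_exp (ContinuousMap.evalAlgHom ℂ ℂ x) (continuous_eval_const x) _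
  rw [h1]
  have h2 : (c • ofRealCM f) x = c * (f x : ℂ) := rfl
  rw [h2, ← Complex.exp_eq_exp_ℂ]
  rw [Complex.norm_exp]
  have h3 : (c * (f x : ℂ)).re = 0 := by
    simp [Complex.mul_re, hc]
  rw [h3, Real.exp_zero]

lemma CX_real_zero (B : C(X, ℂ) →L[ℂ] C(X, ℂ) →L[ℂ] ℂ)
    (hB : ∀ p q r, B (p * q) r = B p (q * r) + B q (p * r)) (f : C(X, ℝ)) (r : C(X, ℂ)) :
    B (ofRealCM f) r = 0 := by
  have key : ∀ t : ℝ, |t| * ‖B (ofRealCM f) r‖ ≤ ‖B‖ * ‖r‖ := by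
    intro t
    set c : ℂ := (t : ℂ) * Complex.I with hc
    have hcre : c.re = 0 := by simp [hc]
    set g : C(X, ℂ) := c • ofRealCM f with hg
    have hid := CX_exp_rule B hB g (NormedSpace.exp (-g) * r)
    have hinv : NormedSpace.exp g * NormedSpace.exp (-g) = 1 := by
      rw [← NormedSpace.exp_add_of_commute (Commute.refl g).neg_right, add_neg_cancel,
        NormedSpace.exp_zero]
    have hval : B g (NormedSpace.exp g * (NormedSpace.exp (-g) * r)) = B g r := by
      rw [← mul_assoc, hinv, one_mul]
    rw [hval] at hid
    have hBg : B g r = c • B (ofRealCM f) r := by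
      rw [hg, map_smul]; rfl
    have hnorm1 : ‖NormedSpace.exp g‖ ≤ 1 := norm_exp_smul_le f c hcre
    have hnorm2 : ‖NormedSpace.exp (-g)‖ ≤ 1 := by
      have : -g = (-c) • ofRealCM f := by rw [hg, neg_smul]
      rw [this]
      exact norm_exp_smul_le f (-c) (by simp [hc])
    have hbound : ‖B (NormedSpace.exp g) (NormedSpace.exp (-g) * r)‖ ≤ ‖B‖ * ‖r‖ := by
      calc ‖B (NormedSpace.exp g) (NormedSpace.exp (-g) * r)‖
          ≤ ‖B (NormedSpace.exp g)‖ * ‖NormedSpace.exp (-g) * r‖ :=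
            (B _).le_opNorm _
      _ ≤ (‖B‖ * ‖NormedSpace.exp g‖) * (‖NormedSpace.exp (-g)‖ * ‖r‖) := by
            gcongr
            · exact B.le_opNorm _
            · exact norm_mul_le _ _
      _ ≤ (‖B‖ * 1) * (1 * ‖r‖) := by gcongr
      _ = ‖B‖ * ‖r‖ := by ring
    have habs : ‖c‖ = |t| := by
      rw [hc]
      simp
    calc |t| * ‖B (ofRealCM f) r‖ = ‖c • B (ofRealCM f) r‖ := by
          rw [norm_smul, habs]
    _ = ‖B (NormedSpace.exp g) (NormedSpace.exp (-g) * r)‖ := by rw [hid, hBg]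
    _ ≤ ‖B‖ * ‖r‖ := hbound
  by_contra hne
  have hpos : 0 < ‖B (ofRealCM f) r‖ := norm_pos_iff.mpr hne
  obtain ⟨t, ht⟩ := exists_nat_gt ((‖B‖ * ‖r‖) / ‖B (ofRealCM f) r‖)
  have h1 := key t
  rw [abs_of_nonneg (by positivity)] at h1
  have h2 : (‖B‖ * ‖r‖) / ‖B (ofRealCM f) r‖ < t := ht
  have := (div_lt_iff₀ hpos).mp h2
  linarith

theorem CX_bilinear_zero (B : C(X, ℂ) →L[ℂ] C(X, ℂ) →L[ℂ] ℂ)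
    (hB : ∀ p q r, B (p * q) r = B p (q * r) + B q (p * r)) (p r : C(X, ℂ)) :
    B p r = 0 := by
  have hdecomp : p = ofRealCM ⟨fun x => (p x).re, Complex.continuous_re.comp (map_continuous p)⟩
      + Complex.I • ofRealCM ⟨fun x => (p x).im, Complex.continuous_im.comp (map_continuous p)⟩ := by
    ext x
    simp only [ContinuousMap.add_apply, ContinuousMap.smul_apply, ofRealCM_apply,
      ContinuousMap.coe_mk, smul_eq_mul]
    rw [mul_comm, Complex.re_add_im]
  rw [hdecomp, map_add, ContinuousLinearMap.add_apply, map_smul,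
    ContinuousLinearMap.smul_apply, CX_real_zero B hB, CX_real_zero B hB]
  simp

end L5b
section L6

variable {X A : Type u} [TopologicalSpace X] [CompactSpace X] [T2Space X]
  [NonUnitalNormedRing A] [NormedSpace ℂ A] [IsScalarTower ℂ A A] [SMulCommClass ℂ A A]

theorem elm_span_dense :
    Dense (↑(Submodule.span ℂ {h : C(X, A) | ∃ φ a, h = elm φ a}) : Set C(X, A)) := by
  rw [Metric.dense_iff]
  intro g r hr
  set U : X → Set X := fun i => g ⁻¹' Metric.ball (g i) (r / 2) with hU
  have hUo : ∀ i, IsOpen (U i) := fun i => Metric.isOpen_ball.preimage (map_continuous g)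
  have hUc : (Set.univ : Set X) ⊆ ⋃ i, U i := fun x _ =>
    Set.mem_iUnion.2 ⟨x, by simp [hU, Metric.mem_ball, half_pos hr]⟩
  obtain ⟨f, hf⟩ := PartitionOfUnity.exists_isSubordinate isClosed_univ U hUo hUc
  have hfin : {i : X | (Function.support (f i)).Nonempty}.Finite :=
    f.locallyFinite.finite_nonempty_of_compact
  set T : Finset X := hfin.toFinset with hT
  set h : C(X, A) := ∑ i ∈ T, elm (ofRealCM (f i)) (g i) with hh
  have hmem : h ∈ Submodule.span ℂ {h : C(X, A) | ∃ φ a, h = elm φ a} :=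
    Submodule.sum_mem _ fun i _ => Submodule.subset_span ⟨_, _, rfl⟩
  have hsupp : ∀ x : X, (Function.support fun i => f i x) ⊆ ↑T := by
    intro x i hi
    simp only [hT, Set.Finite.coe_toFinset, Set.mem_setOf_eq]
    exact ⟨x, hi⟩
  have hsum1 : ∀ x : X, ∑ i ∈ T, f i x = 1 := fun x => by
    rw [← finsum_eq_sum_of_support_subset _ (hsupp x)]
    exact f.sum_eq_one (Set.mem_univ x)
  have hnorm : ‖g - h‖ ≤ r / 2 := by
    refine (ContinuousMap.norm_le _ (le_of_lt (half_pos hr))).mpr fun x => ?_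
    have hgx : g x = ∑ i ∈ T, ((f i x : ℂ)) • g x := by
      rw [← Finset.sum_smul]
      have hcast : (∑ i ∈ T, ((f i x : ℝ) : ℂ)) = ((∑ i ∈ T, f i x : ℝ) : ℂ) := by push_cast; ring
      rw [hcast, hsum1 x]
      simp
    have hx : (g - h) x = ∑ i ∈ T, ((f i x : ℂ)) • (g x - g i) := by
      have hhx : h x = ∑ i ∈ T, ((f i x : ℂ)) • g i := by
        simp [hh]
      rw [ContinuousMap.sub_apply, hhx]
      calc g x - ∑ i ∈ T, ((f i x : ℂ)) • g i
          = (∑ i ∈ T, ((f i x : ℂ)) • g x) - ∑ i ∈ T, ((f i x : ℂ)) • g i := by rw [← hgx]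
      _ = ∑ i ∈ T, (((f i x : ℂ)) • g x - ((f i x : ℂ)) • g i) := (Finset.sum_sub_distrib ..).symm
      _ = ∑ i ∈ T, ((f i x : ℂ)) • (g x - g i) := by simp [smul_sub]
    have hterm : ∀ i ∈ T, ‖((f i x : ℂ)) • (g x - g i)‖ ≤ f i x * (r / 2) := by
      intro i _
      rw [norm_smul]
      rcases eq_or_ne (f i x) 0 with h0 | h0
      · simp [h0]
      · have hxU : x ∈ U i := hf i (subset_tsupport _ h0)
        have hlt : ‖g x - g i‖ < r / 2 := by
          have := hxU
          simp only [hU, Set.mem_preimage, Metric.mem_ball, dist_eq_norm] at this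
          exact this
        have hn : ‖((f i x : ℝ) : ℂ)‖ = f i x := by
          rw [Complex.norm_real, Real.norm_eq_abs]
          exact abs_of_nonneg (f.nonneg i x)
        rw [hn]
        exact mul_le_mul_of_nonneg_left hlt.le (f.nonneg i x)
    calc ‖(g - h) x‖ = ‖∑ i ∈ T, ((f i x : ℂ)) • (g x - g i)‖ := by rw [hx]
    _ ≤ ∑ i ∈ T, ‖((f i x : ℂ)) • (g x - g i)‖ := norm_sum_le _ _
    _ ≤ ∑ i ∈ T, f i x * (r / 2) := Finset.sum_le_sum hterm
    _ = (∑ i ∈ T, f i x) * (r / 2) := by rw [Finset.sum_mul]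
    _ = r / 2 := by rw [hsum1 x, one_mul]
  refine ⟨h, ?_, hmem⟩
  rw [Metric.mem_ball, dist_comm, dist_eq_norm]
  calc ‖g - h‖ ≤ r / 2 := hnorm
  _ < r := by linarith

end L6

open Filter

set_option maxHeartbeats 2000000 in
/-- let `A` be a commutative Banach algebra with a bounded net
`(e_v)` such that `(σ(e_v))` is a bounded approximate identity for `A`, where
`σ ∈ Hom(A)` has dense range. If `A` is `σ`-weakly amenable, then `C(X,A)` is
`σ̃`-weakly amenable, where `σ̃ f = σ ∘ f`. -/
theorem stmt10 {X A : Type u} [TopologicalSpace X] [CompactSpace X] [T2Space X]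
    [NonUnitalNormedRing A] [NormedSpace ℂ A] [IsScalarTower ℂ A A]
    [SMulCommClass ℂ A A] [CompleteSpace A]
    (hcomm : ∀ a b : A, a * b = b * a)
    (σ : A →L[ℂ] A) (hσ : ∀ a b : A, σ (a * b) = σ a * σ b)
    (hdense : DenseRange σ)
    {ι : Type u} [Nonempty ι] [Preorder ι] [IsDirected ι (· ≤ ·)]
    (e : ι → A) (hbdd : ∃ M : ℝ, ∀ v, ‖e v‖ ≤ M)
    (hbai : ∀ a : A, Tendsto (fun v => σ (e v) * a) atTop (nhds a) ∧
      Tendsto (fun v => a * σ (e v)) atTop (nhds a))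
    (hwa : SigmaWeaklyAmenable A σ)
    (σt : C(X, A) →L[ℂ] C(X, A)) (hσt : ∀ (f : C(X, A)) (x : X), σt f x = σ (f x)) :
    SigmaWeaklyAmenable C(X, A) σt := by
  intro D hD
  have hσtconst : ∀ a : A, σt (ContinuousMap.const X a) = ContinuousMap.const X (σ a) := fun a => by
    ext x; simp [hσt]
  have hσtelm : ∀ (φ : C(X, ℂ)) (a : A), σt (elm φ a) = elm φ (σ a) := fun φ a => by
    ext x; simp [hσt]
  -- Step A: `D` kills pairs (constant, elementary)
  have hconst : ∀ (χ : C(X, ℂ)) (a c : A), D (ContinuousMap.const X a) (elm χ c) = 0 := by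
    intro χ
    set Ψ : A →L[ℂ] A →L[ℂ] ℂ := conj2 D (constL X A) (elmL X A χ) with hΨdef
    have hΨ : ∀ a b m, Ψ (a * b) m = Ψ a (σ b * m) + Ψ b (m * σ a) := by
      intro a b m
      simp only [hΨdef, conj2_apply, constL_apply, elmL_apply]
      have h1 : ContinuousMap.const X (a * b)
          = ContinuousMap.const X a * ContinuousMap.const X b := by ext x; simp
      rw [h1, hD, hσtconst, hσtconst, const_mul_elm, elm_mul_const]
    obtain ⟨Λ, hΛ⟩ := hwa Ψ hΨ
    intro a c
    have h2 := hΛ a c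
    rw [hcomm c (σ a), sub_self] at h2
    simpa [hΨdef] using h2
  -- Step B: pulling a constant factor out of the first argument
  have hfact : ∀ (φ : C(X, ℂ)) (u w : A) (ψ : C(X, ℂ)) (c : A),
      D (elm φ u * ContinuousMap.const X w) (elm ψ c) = D (elm φ u) (elm ψ (σ w * c)) := by
    intro φ u w ψ c
    rw [hD, hσtconst, hσtelm, const_mul_elm, elm_mul_elm, hconst, add_zero]
  -- Step C: the Leibniz rule in the `C(X)` variable, for products in `A`
  have hprod : ∀ (φ ψ χ : C(X, ℂ)) (u w c : A),
      D (elm (φ * ψ) (u * w)) (elm χ c)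
        = D (elm φ (u * w)) (elm (ψ * χ) c) + D (elm ψ (u * w)) (elm (φ * χ) c) := by
    intro φ ψ χ u w c
    have l1 : elm (φ * ψ) (u * w) = elm φ u * elm ψ w := (elm_mul_elm _ _ _ _).symm
    have l2 : elm φ (u * w) = elm φ u * ContinuousMap.const X w := (elm_mul_const _ _ _).symm
    have l3 : elm ψ (u * w) = elm ψ w * ContinuousMap.const X u := by
      rw [hcomm u w]; exact (elm_mul_const _ _ _).symm
    rw [l1, hD, hσtelm, hσtelm, elm_mul_elm, elm_mul_elm, l2, l3, hfact, hfact,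
      mul_comm χ φ, hcomm c (σ u)]
  -- Step D: extend to all of `A` using the approximate identity
  haveI : (atTop : Filter ι).NeBot := atTop_neBot
  have hcont : ∀ (η θ : C(X, ℂ)) (m : A), Continuous fun b : A => D (elm η b) (elm θ m) := by
    intro η θ m
    have h : (fun b : A => D (elm η b) (elm θ m))
        = fun b : A =>
          ((ContinuousLinearMap.apply ℂ ℂ (elm θ m)).comp (D.comp (elmL X A η))) b := rfl
    rw [h]
    exact ContinuousLinearMap.continuous _
  have hstar : ∀ (φ ψ χ : C(X, ℂ)) (c a : A),
      D (elm (φ * ψ) a) (elm χ c)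
        = D (elm φ a) (elm (ψ * χ) c) + D (elm ψ a) (elm (φ * χ) c) := by
    intro φ ψ χ c a
    have key : Tendsto (fun v => σ (e v) * a) atTop (nhds a) := (hbai a).1
    have t1 : Tendsto (fun v => D (elm (φ * ψ) (σ (e v) * a)) (elm χ c)) atTop
        (nhds (D (elm (φ * ψ) a) (elm χ c))) := ((hcont _ _ _).tendsto a).comp key
    have t2 : Tendsto (fun v => D (elm φ (σ (e v) * a)) (elm (ψ * χ) c)
          + D (elm ψ (σ (e v) * a)) (elm (φ * χ) c)) atTop
        (nhds (D (elm φ a) (elm (ψ * χ) c) + D (elm ψ a) (elm (φ * χ) c))) :=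
      (((hcont _ _ _).tendsto a).comp key).add (((hcont _ _ _).tendsto a).comp key)
    have heq : (fun v => D (elm (φ * ψ) (σ (e v) * a)) (elm χ c))
        = fun v => D (elm φ (σ (e v) * a)) (elm (ψ * χ) c)
          + D (elm ψ (σ (e v) * a)) (elm (φ * χ) c) :=
      funext fun v => hprod φ ψ χ (σ (e v)) a c
    rw [heq] at t1
    exact tendsto_nhds_unique t1 t2
  -- Step E: weak amenability of `C(X)` kills all elementary pairs
  have helem : ∀ (φ : C(X, ℂ)) (a : A) (χ : C(X, ℂ)) (c : A), D (elm φ a) (elm χ c) = 0 := by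
    intro φ a χ c
    set B : C(X, ℂ) →L[ℂ] C(X, ℂ) →L[ℂ] ℂ :=
      conj2 D ((elmL X A).flip a) ((elmL X A).flip c) with hBdef
    have hB : ∀ p q r, B (p * q) r = B p (q * r) + B q (p * r) := by
      intro p q r
      simp only [hBdef, conj2_apply, ContinuousLinearMap.flip_apply, elmL_apply]
      exact hstar p q r c a
    have h0 := CX_bilinear_zero B hB φ χ
    simpa [hBdef] using h0
  -- Step F: conclude by density of the elementary span
  have hg0 : ∀ (φ : C(X, ℂ)) (a : A) (g : C(X, A)), D (elm φ a) g = 0 := by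
    intro φ a
    have hvan : ∀ g ∈ Submodule.span ℂ {h : C(X, A) | ∃ ψ c, h = elm ψ c},
        D (elm φ a) g = 0 := by
      intro g hg
      induction hg using Submodule.span_induction with
      | mem x hx => obtain ⟨ψ, c, rfl⟩ := hx; exact helem φ a ψ c
      | zero => simp
      | add x y hx hy ihx ihy => simp [ihx, ihy]
      | smul t x hx ih => simp [ih]
    intro g
    have h : (⇑(D (elm φ a)) : C(X, A) → ℂ) = fun _ => 0 :=
      Continuous.ext_on elm_span_dense (D (elm φ a)).continuous continuous_const
        fun y hy => hvan y hy
    exact congrFun h g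
  have hzero : ∀ f g : C(X, A), D f g = 0 := by
    intro f g
    have hvan : ∀ f' ∈ Submodule.span ℂ {h : C(X, A) | ∃ ψ c, h = elm ψ c}, D f' g = 0 := by
      intro f' hf'
      induction hf' using Submodule.span_induction with
      | mem x hx => obtain ⟨ψ, c, rfl⟩ := hx; exact hg0 ψ c g
      | zero => simp
      | add x y hx hy ihx ihy => rw [map_add]; simp [ihx, ihy]
      | smul t x hx ih => rw [map_smul]; simp [ih]
    have hc : Continuous fun f' : C(X, A) => D f' g := by
      have h : (fun f' : C(X, A) => D f' g)
          = fun f' => ((ContinuousLinearMap.apply ℂ ℂ g).comp D) f' := rfl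
      rw [h]
      exact ContinuousLinearMap.continuous _
    have h : (fun f' : C(X, A) => D f' g) = fun _ => 0 :=
      Continuous.ext_on elm_span_dense hc continuous_const fun y hy => hvan y hy
    exact congrFun h f
  exact ⟨0, fun f g => by simp [hzero]⟩
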